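/- Let E be a real normed vector space, K > 0, a > 0, and let γ : [0, a] → E be a K-Lipschitz curve parametrized by the distance, i.e. ‖γ(t)‖ = t for all t ∈ [0, a]. Then for all 0 ≤ s ≤ t ≤ a, the length of γ restricted to [s, t] (total variation eVariationOn γ over [s,t]) is at most K·(t − s), and t − s ≤ ‖γ(s) − γ(t)‖; consequently the inner (length) distance between γ(s) and γ(t) within the image of γ is at most K·‖γ(s) − γ(t)‖, i.e. the image of γ is Lipschitz normally embedded with constant K. -/

import Mathlib

open Filter Set

/-- The inner (length) distance between `x` and `y` inside `X` : the infimum of the lengths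
(total variations) of continuous paths `γ : [0,1] → E` with image in `X` joining `x` to `y`. -/
noncomputable def innerDist {E : Type*} [NormedAddCommGroup E] [NormedSpace ℝ E]
    (X : Set E) (x y : E) : ENNReal :=
  ⨅ (γ : ℝ → E) (_ : ContinuousOn γ (Set.Icc 0 1)) (_ : γ '' Set.Icc 0 1 ⊆ X)
    (_ : γ 0 = x) (_ : γ 1 = y), eVariationOn γ (Set.Icc 0 1)

/-- A `K`-Lipschitz curve parametrized by the distance (`‖γ(t)‖ = t`) has, for `s ≤ t`,
length over `[s,t]` at most `K (t - s)`, satisfies `t - s ≤ ‖γ(s) - γ(t)‖`, and hence its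
image is Lipschitz normally embedded with constant `K`. -/
theorem lne_of_parametrized_by_distance
    {E : Type*} [NormedAddCommGroup E] [NormedSpace ℝ E]
    (K a : ℝ) (hK : 0 < K) (ha : 0 < a) (γ : ℝ → E)
    (hlip : LipschitzOnWith (Real.toNNReal K) γ (Set.Icc 0 a))
    (hdist : ∀ t ∈ Set.Icc (0 : ℝ) a, ‖γ t‖ = t) :
    ∀ s t : ℝ, 0 ≤ s → s ≤ t → t ≤ a →
      eVariationOn γ (Set.Icc s t) ≤ ENNReal.ofReal (K * (t - s)) ∧
      t - s ≤ ‖γ s - γ t‖ ∧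
      innerDist (γ '' Set.Icc 0 a) (γ s) (γ t) ≤ ENNReal.ofReal (K * ‖γ s - γ t‖) := by
  intro s t hs hst hta
  have hsub : Set.Icc s t ⊆ Set.Icc 0 a := Set.Icc_subset_Icc hs hta
  have hKnn : ((Real.toNNReal K : NNReal) : ENNReal) = ENNReal.ofReal K := by
    simp [ENNReal.ofReal]
  -- Part 1
  have h1 : eVariationOn γ (Set.Icc s t) ≤ ENNReal.ofReal (K * (t - s)) := by
    have hmono : MonotoneOn (id : ℝ → ℝ) (Set.Icc s t) := monotoneOn_id
    have hid : eVariationOn (id : ℝ → ℝ) (Set.Icc s t) ≤ ENNReal.ofReal (t - s) := by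
      have := hmono.eVariationOn_le (Set.left_mem_Icc.2 hst) (Set.right_mem_Icc.2 hst)
      simpa using this
    calc eVariationOn γ (Set.Icc s t)
        = eVariationOn (γ ∘ id) (Set.Icc s t) := rfl
      _ ≤ (Real.toNNReal K : ENNReal) * eVariationOn (id : ℝ → ℝ) (Set.Icc s t) :=
          (hlip.mono hsub).comp_eVariationOn_le (Set.mapsTo_id _)
      _ ≤ ENNReal.ofReal K * ENNReal.ofReal (t - s) := by
          rw [hKnn]; exact mul_le_mul_right hid _
      _ = ENNReal.ofReal (K * (t - s)) := (ENNReal.ofReal_mul hK.le).symm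
  -- Part 2
  have h2 : t - s ≤ ‖γ s - γ t‖ := by
    have hsmem : s ∈ Set.Icc (0 : ℝ) a := ⟨hs, hst.trans hta⟩
    have htmem : t ∈ Set.Icc (0 : ℝ) a := ⟨hs.trans hst, hta⟩
    calc t - s = ‖γ t‖ - ‖γ s‖ := by rw [hdist t htmem, hdist s hsmem]
      _ ≤ ‖γ t - γ s‖ := norm_sub_norm_le _ _
      _ = ‖γ s - γ t‖ := norm_sub_rev _ _
  refine ⟨h1, h2, ?_⟩
  -- Part 3
  set φ : ℝ → ℝ := fun u => s + u * (t - s) with hφ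
  have hts : 0 ≤ t - s := sub_nonneg.2 hst
  have hφmaps : Set.MapsTo φ (Set.Icc 0 1) (Set.Icc 0 a) := by
    intro u hu
    have h1u : u * (t - s) ≤ 1 * (t - s) := mul_le_mul_of_nonneg_right hu.2 hts
    have h0u : 0 ≤ u * (t - s) := mul_nonneg hu.1 hts
    constructor
    · have : (0:ℝ) ≤ s := hs
      simp only [hφ]; linarith
    · simp only [hφ]; nlinarith
  have hφcont : ContinuousOn φ (Set.Icc 0 1) :=
    (continuous_const.add (continuous_id.mul continuous_const)).continuousOn
  have hδcont : ContinuousOn (γ ∘ φ) (Set.Icc 0 1) :=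
    (hlip.continuousOn).comp hφcont hφmaps
  have hδimg : (γ ∘ φ) '' Set.Icc 0 1 ⊆ γ '' Set.Icc 0 a := by
    rintro x ⟨u, hu, rfl⟩
    exact ⟨φ u, hφmaps hu, rfl⟩
  have hδ0 : (γ ∘ φ) 0 = γ s := by simp [hφ]
  have hδ1 : (γ ∘ φ) 1 = γ t := by simp [hφ]
  have hφmono : MonotoneOn φ (Set.Icc 0 1) := by
    intro u _ v _ huv
    simp only [hφ]
    exact add_le_add_right (mul_le_mul_of_nonneg_right huv hts) _
  have hφvar : eVariationOn φ (Set.Icc 0 1) ≤ ENNReal.ofReal (t - s) := by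
    have := hφmono.eVariationOn_le (Set.left_mem_Icc.2 zero_le_one)
      (Set.right_mem_Icc.2 zero_le_one)
    simpa [hφ] using this
  have hδvar : eVariationOn (γ ∘ φ) (Set.Icc 0 1) ≤ ENNReal.ofReal (K * (t - s)) := by
    calc eVariationOn (γ ∘ φ) (Set.Icc 0 1)
        ≤ (Real.toNNReal K : ENNReal) * eVariationOn φ (Set.Icc 0 1) :=
          hlip.comp_eVariationOn_le hφmaps
      _ ≤ ENNReal.ofReal K * ENNReal.ofReal (t - s) := by
          rw [hKnn]; exact mul_le_mul_right hφvar _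
      _ = ENNReal.ofReal (K * (t - s)) := (ENNReal.ofReal_mul hK.le).symm
  have hle : innerDist (γ '' Set.Icc 0 a) (γ s) (γ t) ≤ eVariationOn (γ ∘ φ) (Set.Icc 0 1) := by
    refine iInf_le_of_le (γ ∘ φ) ?_
    exact iInf_le_of_le hδcont (iInf_le_of_le hδimg
      (iInf_le_of_le hδ0 (iInf_le_of_le hδ1 le_rfl)))
  refine hle.trans (hδvar.trans ?_)
  exact ENNReal.ofReal_le_ofReal (mul_le_mul_of_nonneg_left (by linarith) hK.le)
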